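/- Let K, L be positive even integers with L² < K, and let k be an even integer with K − L² ≤ k ≤ K + L². Then i^k · h(k) = ∏_{ℓ=0}^{|K−k|/2 − 1} ((L² − |K−k|)/2 + 1 + ℓ)/(L²/2 + 1 + ℓ) · ∏_{j=0}^{L²} (K − L²/2 − 1 + j)/((K − L² + k)/2 − 1 + j), where h(k) = i^{-k} · Γ(L²/2+1)² Γ(K+L²/2) Γ((K−L²+k)/2 − 1) / [Γ(K−L²/2−1) Γ((L²−K+k)/2 + 1) Γ((K+L²+k)/2) Γ((K+L²−k)/2 + 1)]. In particular, i^k · h(k) > 0 for all even k in this range. -/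

import Mathlib

open Real Complex

lemma gamma_prod_aux (x : ℝ) (hx : 0 < x) (n : ℕ) :
    ∏ ℓ ∈ Finset.range n, (x + (ℓ : ℝ)) = Real.Gamma (x + n) / Real.Gamma x := by
  have h0 := (Real.Gamma_pos_of_pos hx).ne'
  induction n with
  | zero => simp [div_self h0]
  | succ n ih =>
      rw [Finset.prod_range_succ, ih,
        show x + ((n + 1 : ℕ) : ℝ) = (x + n) + 1 by push_cast; ring,
        Real.Gamma_add_one (by positivity)]
      field_simp

lemma aux2 {a b c d e u v x y : ℝ} (hu : u ≠ 0) (hv : v ≠ 0) (hd : d ≠ 0)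
    (he : e ≠ 0) (ha : a ≠ 0) (hc : c ≠ 0) (hxy : x * y = u * v) :
    (a ^ 2 * b * c) / (d * x * e * y) = (a / u) / (v / a) * ((b / d) / (e / c)) := by
  rw [show d * x * e * y = (x * y) * (d * e) by ring, hxy]
  field_simp

theorem stmt_1 (K L : ℕ) (hK : 0 < K) (hL : 0 < L) (hKe : Even K) (hLe : Even L)
    (hLK : (L : ℤ) ^ 2 < K)
    (h : ℤ → ℂ)
    (hdef : ∀ k : ℤ, h k =
      Complex.I ^ (-k) *
        ((Real.Gamma ((L : ℝ) ^ 2 / 2 + 1) ^ 2 * Real.Gamma ((K : ℝ) + (L : ℝ) ^ 2 / 2) *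
            Real.Gamma (((K : ℝ) - (L : ℝ) ^ 2 + (k : ℝ)) / 2 - 1)) /
          (Real.Gamma ((K : ℝ) - (L : ℝ) ^ 2 / 2 - 1) *
            Real.Gamma (((L : ℝ) ^ 2 - (K : ℝ) + (k : ℝ)) / 2 + 1) *
            Real.Gamma (((K : ℝ) + (L : ℝ) ^ 2 + (k : ℝ)) / 2) *
            Real.Gamma (((K : ℝ) + (L : ℝ) ^ 2 - (k : ℝ)) / 2 + 1)) : ℝ))
    (k : ℤ) (hke : Even k) (h1 : (K : ℤ) - (L : ℤ) ^ 2 ≤ k) (h2 : k ≤ (K : ℤ) + (L : ℤ) ^ 2) :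
    Complex.I ^ k * h k =
      ((∏ ℓ ∈ Finset.range (((K : ℤ) - k).natAbs / 2),
          (((L : ℝ) ^ 2 - |(K : ℝ) - (k : ℝ)|) / 2 + 1 + (ℓ : ℝ)) /
            ((L : ℝ) ^ 2 / 2 + 1 + (ℓ : ℝ))) *
        (∏ j ∈ Finset.range (L ^ 2 + 1),
          ((K : ℝ) - (L : ℝ) ^ 2 / 2 - 1 + (j : ℝ)) /
            (((K : ℝ) - (L : ℝ) ^ 2 + (k : ℝ)) / 2 - 1 + (j : ℝ))) : ℝ) ∧
    0 < (∏ ℓ ∈ Finset.range (((K : ℤ) - k).natAbs / 2),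
          (((L : ℝ) ^ 2 - |(K : ℝ) - (k : ℝ)|) / 2 + 1 + (ℓ : ℝ)) /
            ((L : ℝ) ^ 2 / 2 + 1 + (ℓ : ℝ))) *
        (∏ j ∈ Finset.range (L ^ 2 + 1),
          ((K : ℝ) - (L : ℝ) ^ 2 / 2 - 1 + (j : ℝ)) /
            (((K : ℝ) - (L : ℝ) ^ 2 + (k : ℝ)) / 2 - 1 + (j : ℝ))) := by
  -- integer facts
  have hKZ : Even (K : ℤ) := Int.even_coe_nat K |>.mpr hKe
  have hLZ : Even ((L : ℤ) ^ 2) := by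
    obtain ⟨r, hr⟩ := hLe
    exact ⟨2 * r ^ 2, by push_cast [hr]; ring⟩
  have hKL2Z : (2 : ℤ) ≤ (K : ℤ) - (L : ℤ) ^ 2 := by
    obtain ⟨r, hr⟩ := hKZ.sub hLZ
    omega
  have hLn : 2 ≤ L := by obtain ⟨r, hr⟩ := hLe; omega
  -- natAbs facts
  have haeZ : Even ((K : ℤ) - k) := hKZ.sub hke
  have hae : Even ((K : ℤ) - k).natAbs := Int.natAbs_even.mpr haeZ
  have h2m : 2 * (((K : ℤ) - k).natAbs / 2) = ((K : ℤ) - k).natAbs := by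
    obtain ⟨r, hr⟩ := hae; omega
  have haA : ((((K : ℤ) - k).natAbs : ℕ) : ℝ) = |(K : ℝ) - (k : ℝ)| := by
    rw [Nat.cast_natAbs]
    push_cast
    ring
  have hm : (((((K : ℤ) - k).natAbs / 2 : ℕ)) : ℝ) = |(K : ℝ) - (k : ℝ)| / 2 := by
    have : ((2 * (((K : ℤ) - k).natAbs / 2) : ℕ) : ℝ) = |(K : ℝ) - (k : ℝ)| := by
      rw [h2m, haA]
    push_cast at this
    linarith
  -- real bounds
  have hk1 : (K : ℝ) - (L : ℝ) ^ 2 ≤ (k : ℝ) := by exact_mod_cast h1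
  have hk2 : (k : ℝ) ≤ (K : ℝ) + (L : ℝ) ^ 2 := by exact_mod_cast h2
  have hKL2 : (2 : ℝ) ≤ (K : ℝ) - (L : ℝ) ^ 2 := by exact_mod_cast hKL2Z
  have hL2 : (2 : ℝ) ≤ (L : ℝ) ^ 2 := by
    have : (2 : ℝ) ≤ (L : ℝ) := by exact_mod_cast hLn
    nlinarith
  have hAle : |(K : ℝ) - (k : ℝ)| ≤ (L : ℝ) ^ 2 :=
    abs_le.mpr ⟨by linarith, by linarith⟩
  have hA0 : (0 : ℝ) ≤ |(K : ℝ) - (k : ℝ)| := abs_nonneg _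
  -- positivity of gamma arguments
  have p1 : (0 : ℝ) < ((L : ℝ) ^ 2 - |(K : ℝ) - (k : ℝ)|) / 2 + 1 := by linarith
  have p2 : (0 : ℝ) < (L : ℝ) ^ 2 / 2 + 1 := by linarith
  have p3 : (0 : ℝ) < (K : ℝ) - (L : ℝ) ^ 2 / 2 - 1 := by linarith
  have p4 : (0 : ℝ) < ((K : ℝ) - (L : ℝ) ^ 2 + (k : ℝ)) / 2 - 1 := by linarith
  have pv : (0 : ℝ) < ((L : ℝ) ^ 2 + |(K : ℝ) - (k : ℝ)|) / 2 + 1 := by linarith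
  have pb : (0 : ℝ) < (K : ℝ) + (L : ℝ) ^ 2 / 2 := by linarith
  have pe : (0 : ℝ) < ((K : ℝ) + (L : ℝ) ^ 2 + (k : ℝ)) / 2 := by linarith
  have pX : (0 : ℝ) < ((L : ℝ) ^ 2 - (K : ℝ) + (k : ℝ)) / 2 + 1 := by linarith
  have pY : (0 : ℝ) < ((K : ℝ) + (L : ℝ) ^ 2 - (k : ℝ)) / 2 + 1 := by linarith
  -- product-to-Gamma rewrites
  have e1 := gamma_prod_aux _ p1 (((K : ℤ) - k).natAbs / 2)
  have e2 := gamma_prod_aux _ p2 (((K : ℤ) - k).natAbs / 2)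
  have e3 := gamma_prod_aux _ p3 (L ^ 2 + 1)
  have e4 := gamma_prod_aux _ p4 (L ^ 2 + 1)
  have a1 : ((L : ℝ) ^ 2 - |(K : ℝ) - (k : ℝ)|) / 2 + 1 + ((((K : ℤ) - k).natAbs / 2 : ℕ) : ℝ)
      = (L : ℝ) ^ 2 / 2 + 1 := by rw [hm]; ring
  have a2 : (L : ℝ) ^ 2 / 2 + 1 + ((((K : ℤ) - k).natAbs / 2 : ℕ) : ℝ)
      = ((L : ℝ) ^ 2 + |(K : ℝ) - (k : ℝ)|) / 2 + 1 := by rw [hm]; ring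
  have a3 : (K : ℝ) - (L : ℝ) ^ 2 / 2 - 1 + ((L ^ 2 + 1 : ℕ) : ℝ)
      = (K : ℝ) + (L : ℝ) ^ 2 / 2 := by push_cast; ring
  have a4 : ((K : ℝ) - (L : ℝ) ^ 2 + (k : ℝ)) / 2 - 1 + ((L ^ 2 + 1 : ℕ) : ℝ)
      = ((K : ℝ) + (L : ℝ) ^ 2 + (k : ℝ)) / 2 := by push_cast; ring
  rw [a1] at e1
  rw [a2] at e2
  rw [a3] at e3
  rw [a4] at e4
  -- nonzeroness
  have gu := (Real.Gamma_pos_of_pos p1).ne'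
  have ga := (Real.Gamma_pos_of_pos p2).ne'
  have gd := (Real.Gamma_pos_of_pos p3).ne'
  have gc := (Real.Gamma_pos_of_pos p4).ne'
  have gv := (Real.Gamma_pos_of_pos pv).ne'
  have gb := (Real.Gamma_pos_of_pos pb).ne'
  have ge := (Real.Gamma_pos_of_pos pe).ne'
  have gX := (Real.Gamma_pos_of_pos pX).ne'
  have gY := (Real.Gamma_pos_of_pos pY).ne'
  -- the two gammas with |K-k| match the two with explicit signs
  have habs : Real.Gamma (((L : ℝ) ^ 2 - (K : ℝ) + (k : ℝ)) / 2 + 1) *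
      Real.Gamma (((K : ℝ) + (L : ℝ) ^ 2 - (k : ℝ)) / 2 + 1) =
      Real.Gamma (((L : ℝ) ^ 2 - |(K : ℝ) - (k : ℝ)|) / 2 + 1) *
      Real.Gamma (((L : ℝ) ^ 2 + |(K : ℝ) - (k : ℝ)|) / 2 + 1) := by
    rcases le_total (k : ℝ) (K : ℝ) with hcc | hcc
    · rw [_root_.abs_of_nonneg (by linarith)]; ring_nf
    · rw [abs_of_nonpos (by linarith), mul_comm]; ring_nf
  -- key real identity
  have key : (Real.Gamma ((L : ℝ) ^ 2 / 2 + 1) ^ 2 * Real.Gamma ((K : ℝ) + (L : ℝ) ^ 2 / 2) *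
            Real.Gamma (((K : ℝ) - (L : ℝ) ^ 2 + (k : ℝ)) / 2 - 1)) /
          (Real.Gamma ((K : ℝ) - (L : ℝ) ^ 2 / 2 - 1) *
            Real.Gamma (((L : ℝ) ^ 2 - (K : ℝ) + (k : ℝ)) / 2 + 1) *
            Real.Gamma (((K : ℝ) + (L : ℝ) ^ 2 + (k : ℝ)) / 2) *
            Real.Gamma (((K : ℝ) + (L : ℝ) ^ 2 - (k : ℝ)) / 2 + 1)) =
      (∏ ℓ ∈ Finset.range (((K : ℤ) - k).natAbs / 2),
          (((L : ℝ) ^ 2 - |(K : ℝ) - (k : ℝ)|) / 2 + 1 + (ℓ : ℝ)) /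
            ((L : ℝ) ^ 2 / 2 + 1 + (ℓ : ℝ))) *
        (∏ j ∈ Finset.range (L ^ 2 + 1),
          ((K : ℝ) - (L : ℝ) ^ 2 / 2 - 1 + (j : ℝ)) /
            (((K : ℝ) - (L : ℝ) ^ 2 + (k : ℝ)) / 2 - 1 + (j : ℝ))) := by
    rw [Finset.prod_div_distrib, Finset.prod_div_distrib, e1, e2, e3, e4]
    exact aux2 gu gv gd ge ga gc habs
  have hpos : 0 < (∏ ℓ ∈ Finset.range (((K : ℤ) - k).natAbs / 2),
          (((L : ℝ) ^ 2 - |(K : ℝ) - (k : ℝ)|) / 2 + 1 + (ℓ : ℝ)) /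
            ((L : ℝ) ^ 2 / 2 + 1 + (ℓ : ℝ))) *
        (∏ j ∈ Finset.range (L ^ 2 + 1),
          ((K : ℝ) - (L : ℝ) ^ 2 / 2 - 1 + (j : ℝ)) /
            (((K : ℝ) - (L : ℝ) ^ 2 + (k : ℝ)) / 2 - 1 + (j : ℝ))) := by
    rw [Finset.prod_div_distrib, Finset.prod_div_distrib, e1, e2, e3, e4]
    have := Real.Gamma_pos_of_pos p1
    have := Real.Gamma_pos_of_pos p2
    have := Real.Gamma_pos_of_pos p3
    have := Real.Gamma_pos_of_pos p4
    have := Real.Gamma_pos_of_pos pv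
    have := Real.Gamma_pos_of_pos pb
    have := Real.Gamma_pos_of_pos pe
    positivity
  refine ⟨?_, hpos⟩
  rw [hdef k, ← mul_assoc, ← zpow_add₀ Complex.I_ne_zero, add_neg_cancel, zpow_zero, one_mul]
  exact Complex.ofReal_inj.mpr key
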